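/- Existence of the boundary form at infinity: if sequences x, y, f, g : ℕ → ℂ^{2n} satisfy ℒ(x)(t) = W(t)·R(f)(t) and ℒ(y)(t) = W(t)·R(g)(t) for all t ∈ ℕ, and each of the four sequences u ∈ {x, y, f, g} is square-summable with respect to W, i.e. the series ∑_{t=0}^{∞} R(u)(t)* W(t) R(u)(t) converges, then the limit lim_{t→∞} y(t)* J x(t) exists (the complex sequence t ↦ y(t)* J x(t) converges). -/

import Mathlib

open Matrix Filter Topology
open scoped ComplexOrder

noncomputable section

/-- The `2n × 2n` canonical symplectic matrix `J = [[0, -Iₙ],[Iₙ, 0]]`,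
with `ℂ^{2n}` modelled as functions on `Fin n ⊕ Fin n`. -/
def symJ (n : ℕ) : Matrix (Fin n ⊕ Fin n) (Fin n ⊕ Fin n) ℂ :=
  Matrix.fromBlocks 0 (-1) 1 0

/-- The partial right shift `R(y)(t) = (y₁(t+1), y₂(t))`. -/
def Rsh (n : ℕ) (y : ℕ → (Fin n ⊕ Fin n → ℂ)) (t : ℕ) : Fin n ⊕ Fin n → ℂ :=
  Sum.elim (fun i => y (t + 1) (Sum.inl i)) (fun i => y t (Sum.inr i))

/-- The difference expression `ℒ(y)(t) = J·(y(t+1) − y(t)) − P(t)·R(y)(t)`. -/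
def Lexpr (n : ℕ) (P : ℕ → Matrix (Fin n ⊕ Fin n) (Fin n ⊕ Fin n) ℂ)
    (y : ℕ → (Fin n ⊕ Fin n → ℂ)) (t : ℕ) : Fin n ⊕ Fin n → ℂ :=
  (symJ n).mulVec (y (t + 1) - y t) - (P t).mulVec (Rsh n y t)

/-- Mixed `W`-square-summability from diagonal `W`-square-summability (Cauchy–Schwarz). -/
lemma summable_mixed_of_summable_diag {m : Type*} [Fintype m] [DecidableEq m]
    (W : ℕ → Matrix m m ℂ) (hW : ∀ t, (W t).PosSemidef) (a b : ℕ → (m → ℂ))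
    (ha : Summable (fun t => star (a t) ⬝ᵥ (W t).mulVec (a t)))
    (hb : Summable (fun t => star (b t) ⬝ᵥ (W t).mulVec (b t))) :
    Summable (fun t => star (a t) ⬝ᵥ (W t).mulVec (b t)) := by
  choose B hB using fun t => (by
    open scoped MatrixOrder Matrix.Norms.L2Operator in
    obtain ⟨B, hB⟩ := CStarAlgebra.nonneg_iff_eq_star_mul_self.mp (hW t).nonneg
    exact ⟨B, hB⟩ : ∃ B : Matrix m m ℂ, W t = Bᴴ * B)
  have key : ∀ (v w : ℕ → m → ℂ) t, star (v t) ⬝ᵥ (W t).mulVec (w t)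
      = inner ℂ ((WithLp.equiv 2 (m → ℂ)).symm (B t *ᵥ v t))
          ((WithLp.equiv 2 (m → ℂ)).symm (B t *ᵥ w t)) := by
    intro v w t
    rw [WithLp.equiv_symm_apply, EuclideanSpace.inner_toLp_toLp, hB t, ← mulVec_mulVec, dotProduct_mulVec,
      ← star_mulVec, dotProduct_comm]
  set u : ℕ → EuclideanSpace ℂ m := fun t => (WithLp.equiv 2 (m → ℂ)).symm (B t *ᵥ a t)
  set v : ℕ → EuclideanSpace ℂ m := fun t => (WithLp.equiv 2 (m → ℂ)).symm (B t *ᵥ b t)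
  have hnormsq : ∀ (c : ℕ → m → ℂ), Summable (fun t => star (c t) ⬝ᵥ (W t).mulVec (c t)) →
      Summable (fun t => ‖(WithLp.equiv 2 (m → ℂ)).symm (B t *ᵥ c t)‖ ^ 2) := by
    intro c hc
    have := hc.map Complex.reCLM.toLinearMap.toAddMonoidHom Complex.reCLM.continuous
    convert this using 1
    funext t
    simp only [Function.comp_apply, key c c t, inner_self_eq_norm_sq_to_K]
    simp [← Complex.ofReal_pow]
  have hu := hnormsq a ha
  have hv := hnormsq b hb
  simp_rw [fun t => key a b t]
  apply Summable.of_norm_bounded (((hu.add hv).div_const 2))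
  intro t
  calc ‖(inner ℂ (u t) (v t) : ℂ)‖ ≤ ‖u t‖ * ‖v t‖ := norm_inner_le_norm _ _
    _ ≤ (‖u t‖^2 + ‖v t‖^2)/2 := by nlinarith [sq_nonneg (‖u t‖ - ‖v t‖)]

/-- The symplectic-matrix part of the discrete Lagrange identity. -/
lemma symJ_lagrange (n : ℕ) (x y : ℕ → (Fin n ⊕ Fin n → ℂ)) (t : ℕ) :
    star (Rsh n y t) ⬝ᵥ (symJ n).mulVec (x (t+1) - x t)
      + star (y (t+1) - y t) ⬝ᵥ (symJ n).mulVec (Rsh n x t)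
    = star (y (t+1)) ⬝ᵥ (symJ n).mulVec (x (t+1))
      - star (y t) ⬝ᵥ (symJ n).mulVec (x t) := by
  simp [symJ, Rsh, mulVec, dotProduct, fromBlocks, Fintype.sum_sum_type,
    Finset.mul_sum, mul_sub, sub_mul, Finset.sum_sub_distrib, Finset.sum_add_distrib]
  ring_nf

/-- Existence of the boundary form at infinity: if `ℒ(x) = W R(f)`, `ℒ(y) = W R(g)` and
`x, y, f, g` are square-summable with respect to `W`, then `lim_{t→∞} y(t)* J x(t)` exists. -/
theorem boundary_form_exists (n : ℕ) (hn : 0 < n)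
    (P W : ℕ → Matrix (Fin n ⊕ Fin n) (Fin n ⊕ Fin n) ℂ)
    (hP : ∀ t, (P t).IsHermitian) (hW : ∀ t, (W t).PosSemidef)
    (x y f g : ℕ → (Fin n ⊕ Fin n → ℂ))
    (hx : ∀ t, Lexpr n P x t = (W t).mulVec (Rsh n f t))
    (hy : ∀ t, Lexpr n P y t = (W t).mulVec (Rsh n g t))
    (hsq : ∀ u ∈ ({x, y, f, g} : Set (ℕ → (Fin n ⊕ Fin n → ℂ))),
      Summable (fun t => star (Rsh n u t) ⬝ᵥ (W t).mulVec (Rsh n u t))) :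
    ∃ l : ℂ, Tendsto (fun t => star (y t) ⬝ᵥ (symJ n).mulVec (x t)) atTop (𝓝 l) := by
  set S : ℕ → ℂ := fun t => star (y t) ⬝ᵥ (symJ n).mulVec (x t) with hS
  set d : ℕ → ℂ := fun t => star (Rsh n y t) ⬝ᵥ (W t).mulVec (Rsh n f t)
      - star (Rsh n g t) ⬝ᵥ (W t).mulVec (Rsh n x t) with hd
  have hWh : ∀ t, (W t)ᴴ = W t := fun t => (hW t).1
  have hJc : (symJ n)ᴴ = -(symJ n) := by
    simp [symJ, fromBlocks_conjTranspose, Matrix.fromBlocks_neg]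
  -- the discrete Lagrange identity
  have lag : ∀ t, d t = S (t+1) - S t := by
    intro t
    have h1 : (W t).mulVec (Rsh n f t) = Lexpr n P x t := (hx t).symm
    have h2 : star (Rsh n g t) ⬝ᵥ (W t).mulVec (Rsh n x t)
        = star (Lexpr n P y t) ⬝ᵥ Rsh n x t := by
      rw [hy t, star_mulVec, ← dotProduct_mulVec, hWh t]
    have hJ := symJ_lagrange n x y t
    simp only [hd, hS, h1, h2, Lexpr]
    rw [star_sub, sub_dotProduct, dotProduct_sub, star_mulVec (P t), ← dotProduct_mulVec,
      hP t, star_mulVec (symJ n), ← dotProduct_mulVec, hJc, neg_mulVec, dotProduct_neg]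
    linear_combination hJ
  have hA : Summable (fun t => star (Rsh n y t) ⬝ᵥ (W t).mulVec (Rsh n f t)) :=
    summable_mixed_of_summable_diag W hW (Rsh n y) (Rsh n f) (hsq y (by simp)) (hsq f (by simp))
  have hB : Summable (fun t => star (Rsh n g t) ⬝ᵥ (W t).mulVec (Rsh n x t)) :=
    summable_mixed_of_summable_diag W hW (Rsh n g) (Rsh n x) (hsq g (by simp)) (hsq x (by simp))
  have hdsum : Summable d := hA.sub hB
  have hpart : Tendsto (fun T => ∑ t ∈ Finset.range T, d t) atTop (𝓝 (∑' t, d t)) :=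
    hdsum.hasSum.tendsto_sum_nat
  have hps : ∀ T, ∑ t ∈ Finset.range T, d t = S T - S 0 := by
    intro T
    calc ∑ t ∈ Finset.range T, d t = ∑ t ∈ Finset.range T, (S (t+1) - S t) :=
          Finset.sum_congr rfl (fun t _ => lag t)
      _ = S T - S 0 := Finset.sum_range_sub S T
  refine ⟨S 0 + ∑' t, d t, ?_⟩
  have := (tendsto_const_nhds (x := S 0)).add hpart
  refine this.congr (fun T => ?_)
  rw [hps T]
  ring
end
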